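/- For n ≥ 1, in the exterior algebra Λ_n over ℝ on generators ε_0,…,ε_n, with codegeneracies s^j : Λ_n → Λ_{n−1} (0 ≤ j ≤ n−1) given by s^j(ε_k) = ε_k for k ≤ j and s^j(ε_k) = ε_{k−1} for k > j, the normalized part ⋂_{j=1}^{n} ker(s^{j−1} : Λ_n → Λ_{n−1}) is the two-dimensional ℝ-linear span of Δ_n = (ε_1 − ε_0)(ε_2 − ε_1)⋯(ε_n − ε_{n−1}) and π_n = ε_0 ε_1 ⋯ ε_n. -/

import Mathlib

/-! Statement 17: the normalized part `⋂_{j=1}^n ker (s^{j-1} : Λ_n → Λ_{n-1})` is the span of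
`Δ_n = (ε_1 - ε_0)⋯(ε_n - ε_{n-1})` and `π_n = ε_0 ε_1 ⋯ ε_n`. -/

noncomputable section

/-- `Λ_n`: the exterior algebra over `ℝ` on the generators `ε_0, …, ε_n`. -/
abbrev Lam (n : ℕ) := ExteriorAlgebra ℝ (Fin (n + 1) → ℝ)

/-- The generator `ε_i ∈ Λ_n`. -/
def eps (n : ℕ) (i : Fin (n + 1)) : Lam n := ExteriorAlgebra.ι ℝ (Pi.single i 1)

/-- The algebra homomorphism `Λ_a → Λ_b` sending `ε_i ↦ ε_{g i}`. -/
def genMap {a b : ℕ} (g : Fin (a + 1) → Fin (b + 1)) : Lam a →ₐ[ℝ] Lam b :=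
  ExteriorAlgebra.lift ℝ
    ⟨(ExteriorAlgebra.ι ℝ).comp
        (∑ i : Fin (a + 1),
          (LinearMap.single ℝ (fun _ : Fin (b + 1) => ℝ) (g i)).comp (LinearMap.proj i)),
      fun m => ExteriorAlgebra.ι_sq_zero _⟩

/-- The codegeneracy `s^j : Λ_{m+1} → Λ_m` (`0 ≤ j ≤ m`): `s^j(ε_i) = ε_i` for `i ≤ j` and
`s^j(ε_i) = ε_{i-1}` for `i > j`. -/
def sdeg (m : ℕ) (j : Fin (m + 1)) : Lam (m + 1) →ₐ[ℝ] Lam m :=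
  genMap (fun i : Fin (m + 2) => Fin.predAbove j i)

/-- `Δ_n = (ε_1 - ε_0)(ε_2 - ε_1) ⋯ (ε_n - ε_{n-1}) ∈ Λ_n`. -/
def Delta (n : ℕ) : Lam n :=
  ((List.finRange n).map (fun i : Fin n => eps n i.succ - eps n i.castSucc)).prod

/-- `π_n = ε_0 ε_1 ⋯ ε_n ∈ Λ_n`. -/
def piTop (n : ℕ) : Lam n :=
  ((List.finRange (n + 1)).map (fun i => eps n i)).prod

namespace Stmt17Aux

open ExteriorAlgebra

/-- The linear map on coordinates underlying `genMap`. -/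
def gvec {a b : ℕ} (g : Fin (a + 1) → Fin (b + 1)) :
    (Fin (a + 1) → ℝ) →ₗ[ℝ] (Fin (b + 1) → ℝ) :=
  ∑ i : Fin (a + 1),
    (LinearMap.single ℝ (fun _ : Fin (b + 1) => ℝ) (g i)).comp (LinearMap.proj i)

lemma genMap_ι {a b : ℕ} (g : Fin (a + 1) → Fin (b + 1)) (v : Fin (a + 1) → ℝ) :
    genMap g (ExteriorAlgebra.ι ℝ v) = ExteriorAlgebra.ι ℝ (gvec g v) := by
  simp [genMap, gvec, ExteriorAlgebra.lift_ι_apply]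

lemma gvec_apply {a b : ℕ} (g : Fin (a + 1) → Fin (b + 1)) (v : Fin (a + 1) → ℝ) :
    gvec g v = ∑ i : Fin (a + 1), Pi.single (g i) (v i) := by
  simp [gvec, LinearMap.sum_apply]

lemma gvec_single {a b : ℕ} (g : Fin (a + 1) → Fin (b + 1)) (k : Fin (a + 1)) (c : ℝ) :
    gvec g (Pi.single k c) = Pi.single (g k) c := by
  rw [gvec_apply]
  rw [Finset.sum_eq_single k]
  · simp
  · intro i _ hik
    rw [Pi.single_eq_of_ne hik, Pi.single_zero]
  · simp

lemma genMap_eps {a b : ℕ} (g : Fin (a + 1) → Fin (b + 1)) (i : Fin (a + 1)) :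
    genMap g (eps a i) = eps b (g i) := by
  rw [eps, genMap_ι, gvec_single]; rfl

lemma gvec_comp {a b c : ℕ} (g : Fin (b + 1) → Fin (c + 1)) (f : Fin (a + 1) → Fin (b + 1))
    (v : Fin (a + 1) → ℝ) : gvec g (gvec f v) = gvec (fun i => g (f i)) v := by
  rw [gvec_apply f v, map_sum]
  rw [gvec_apply (fun i => g (f i)) v]
  exact Finset.sum_congr rfl fun i _ => gvec_single g (f i) (v i)

lemma genMap_comp {a b c : ℕ} (g : Fin (b + 1) → Fin (c + 1)) (f : Fin (a + 1) → Fin (b + 1))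
    (x : Lam a) : genMap g (genMap f x) = genMap (fun i => g (f i)) x := by
  induction x using ExteriorAlgebra.induction with
  | algebraMap r => simp
  | ι v => rw [genMap_ι, genMap_ι, gvec_comp, genMap_ι]
  | mul x y hx hy => simp [map_mul, hx, hy]
  | add x y hx hy => simp [map_add, hx, hy]

lemma genMap_id {a : ℕ} (x : Lam a) : genMap (fun i => i) x = x := by
  induction x using ExteriorAlgebra.induction with
  | algebraMap r => simp
  | ι v =>
    rw [genMap_ι]
    congr 1
    rw [gvec_apply]
    exact Finset.univ_sum_single v
  | mul x y hx hy => simp [map_mul, hx, hy]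
  | add x y hx hy => simp [map_add, hx, hy]

/-- The top coface `d^{n+1} : Λ_n → Λ_{n+1}`. -/
def dTop (n : ℕ) : Lam n →ₐ[ℝ] Lam (n + 1) := genMap Fin.castSucc

/-- The coordinate vector of `η_{n+1} = ε_{n+1} - ε_n`. -/
def wv (n : ℕ) : Fin (n + 2) → ℝ :=
  Pi.single (Fin.last (n + 1)) 1 - Pi.single ((Fin.last n).castSucc) 1

/-- `η_{n+1} = ε_{n+1} - ε_n ∈ Λ_{n+1}`. -/
def eta (n : ℕ) : Lam (n + 1) := ExteriorAlgebra.ι ℝ (wv n)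

lemma eta_eq (n : ℕ) :
    eta n = eps (n + 1) (Fin.last (n + 1)) - eps (n + 1) ((Fin.last n).castSucc) := by
  rw [eta, wv, map_sub]; rfl

lemma wv_last (n : ℕ) : wv n (Fin.last (n + 1)) = 1 := by
  have h : (Fin.last n).castSucc ≠ Fin.last (n + 1) := (Fin.castSucc_lt_last _).ne
  simp [wv, Pi.single_eq_of_ne h.symm]

/-- Contraction with the last coordinate functional. -/
def del (n : ℕ) : Lam n →ₗ[ℝ] Lam n :=
  CliffordAlgebra.contractLeft (Q := (0 : QuadraticForm ℝ (Fin (n + 1) → ℝ)))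
    (LinearMap.proj (Fin.last n))

lemma del_ι_mul (n : ℕ) (v : Fin (n + 1) → ℝ) (x : Lam n) :
    del n (ExteriorAlgebra.ι ℝ v * x) = v (Fin.last n) • x - ExteriorAlgebra.ι ℝ v * del n x :=
  CliffordAlgebra.contractLeft_ι_mul _ _ _

lemma del_algebraMap (n : ℕ) (r : ℝ) : del n (algebraMap ℝ (Lam n) r) = 0 :=
  CliffordAlgebra.contractLeft_algebraMap _ _ _

lemma del_one (n : ℕ) : del n 1 = 0 :=
  CliffordAlgebra.contractLeft_one _ _

lemma gvec_castSucc_last (n : ℕ) (v : Fin (n + 1) → ℝ) :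
    gvec Fin.castSucc v (Fin.last (n + 1)) = 0 := by
  rw [gvec_apply, Finset.sum_apply]
  exact Finset.sum_eq_zero fun i _ => Pi.single_eq_of_ne (Fin.castSucc_lt_last i).ne.symm _

lemma gvec_castSucc_of_last_eq_zero (n : ℕ) (u : Fin (n + 2) → ℝ)
    (hu : u (Fin.last (n + 1)) = 0) :
    gvec Fin.castSucc (fun i => u i.castSucc) = u := by
  funext j
  induction j using Fin.lastCases with
  | last => rw [gvec_castSucc_last, hu]
  | cast i =>
    rw [gvec_apply, Finset.sum_apply, Finset.sum_eq_single i]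
    · rw [Pi.single_eq_same]
    · intro k _ hk
      exact Pi.single_eq_of_ne (fun h => hk (Fin.castSucc_injective _ h).symm) _
    · simp

lemma del_dTop_mul (n : ℕ) (y : Lam n) :
    ∀ z : Lam (n + 1), del (n + 1) z = 0 → del (n + 1) (dTop n y * z) = 0 := by
  induction y using ExteriorAlgebra.induction with
  | algebraMap r =>
    intro z hz
    rw [AlgHom.commutes, ← Algebra.smul_def, map_smul, hz, smul_zero]
  | ι v =>
    intro z hz
    rw [dTop, genMap_ι, del_ι_mul, hz, gvec_castSucc_last, zero_smul, mul_zero, sub_zero]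
  | mul a b ha hb =>
    intro z hz
    rw [map_mul (dTop n) a b, mul_assoc]
    exact ha _ (hb _ hz)
  | add a b ha hb =>
    intro z hz
    rw [map_add, add_mul, map_add, ha _ hz, hb _ hz, add_zero]

lemma del_dTop (n : ℕ) (y : Lam n) : del (n + 1) (dTop n y) = 0 := by
  simpa using del_dTop_mul n y 1 (del_one _)

lemma del_eta_mul (n : ℕ) (x : Lam (n + 1)) :
    del (n + 1) (eta n * x) = x - eta n * del (n + 1) x := by
  rw [eta, del_ι_mul, wv_last, one_smul]

lemma sdeg_last_dTop (n : ℕ) (x : Lam n) : sdeg n (Fin.last n) (dTop n x) = x := by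
  rw [sdeg, dTop, genMap_comp]
  have h : (fun i : Fin (n + 1) => (Fin.last n).predAbove i.castSucc) = fun i => i := by
    funext i
    rw [Fin.predAbove]
    rw [dif_neg (by simp [Fin.castSucc_lt_castSucc_iff, Fin.le_last, not_lt])]
    exact Fin.castPred_castSucc _
  rw [h, genMap_id]

lemma dTop_injective (n : ℕ) {x y : Lam n} (h : dTop n x = dTop n y) : x = y := by
  have := congrArg (sdeg n (Fin.last n)) h
  rwa [sdeg_last_dTop, sdeg_last_dTop] at this

/-- `ι v * x = involute x * ι v`. -/
lemma ι_mul_comm (n : ℕ) (v : Fin (n + 1) → ℝ) (x : Lam n) :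
    ExteriorAlgebra.ι ℝ v * x = CliffordAlgebra.involute x * ExteriorAlgebra.ι ℝ v := by
  induction x using ExteriorAlgebra.induction with
  | algebraMap r => simp [Algebra.commutes]
  | ι u =>
    have h := ExteriorAlgebra.ι_sq_zero (R := ℝ) (u + v)
    rw [map_add, add_mul, mul_add, mul_add, ExteriorAlgebra.ι_sq_zero,
      ExteriorAlgebra.ι_sq_zero, zero_add, add_zero] at h
    rw [CliffordAlgebra.involute_ι, neg_mul]
    exact eq_neg_of_add_eq_zero_left ((add_comm _ _).trans h)
  | mul a b ha hb =>
    rw [map_mul, ← mul_assoc, ha, mul_assoc, hb, ← mul_assoc]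
  | add a b ha hb => rw [map_add, mul_add, add_mul, ha, hb]

lemma involute_dTop (n : ℕ) (x : Lam n) :
    CliffordAlgebra.involute (dTop n x) = dTop n (CliffordAlgebra.involute x) := by
  induction x using ExteriorAlgebra.induction with
  | algebraMap r => simp
  | ι u => rw [dTop, genMap_ι, CliffordAlgebra.involute_ι, CliffordAlgebra.involute_ι, map_neg,
      genMap_ι]
  | mul a b ha hb =>
    rw [map_mul, map_mul, ha, hb, ← map_mul (dTop n), ← map_mul CliffordAlgebra.involute]
  | add a b ha hb =>
    rw [map_add, map_add, ha, hb, ← map_add (dTop n), ← map_add CliffordAlgebra.involute]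

lemma eta_mul_dTop (n : ℕ) (a : Lam n) :
    eta n * dTop n a = dTop n (CliffordAlgebra.involute a) * eta n := by
  rw [eta, ι_mul_comm, involute_dTop]

lemma dTop_mul_eta (n : ℕ) (a : Lam n) :
    dTop n a * eta n = eta n * dTop n (CliffordAlgebra.involute a) := by
  rw [eta_mul_dTop, CliffordAlgebra.involute_involute]

lemma eta_sq (n : ℕ) : eta n * eta n = 0 := ExteriorAlgebra.ι_sq_zero _

/-- Spanning: every element of `Λ_{n+1}` is `dTop a + η * dTop b`. -/
lemma spanning (n : ℕ) (x : Lam (n + 1)) :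
    ∃ a b : Lam n, x = dTop n a + eta n * dTop n b := by
  induction x using ExteriorAlgebra.induction with
  | algebraMap r =>
    exact ⟨algebraMap ℝ _ r, 0, by simp⟩
  | ι v =>
    refine ⟨ExteriorAlgebra.ι ℝ (fun i => (v - v (Fin.last (n + 1)) • wv n) i.castSucc),
      algebraMap ℝ _ (v (Fin.last (n + 1))), ?_⟩
    have hu : (v - v (Fin.last (n + 1)) • wv n) (Fin.last (n + 1)) = 0 := by
      simp [wv_last]
    rw [dTop, genMap_ι, gvec_castSucc_of_last_eq_zero n _ hu, AlgHom.commutes,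
      ← Algebra.commutes, ← Algebra.smul_def, eta, ← map_smul (ExteriorAlgebra.ι ℝ),
      ← map_add (ExteriorAlgebra.ι ℝ), sub_add_cancel]
  | mul x y hx hy =>
    obtain ⟨a, b, rfl⟩ := hx
    obtain ⟨c, d, rfl⟩ := hy
    refine ⟨a * c, CliffordAlgebra.involute a * d + b * c, ?_⟩
    have h2 : dTop n a * (eta n * dTop n d) = eta n * dTop n (CliffordAlgebra.involute a * d) := by
      rw [← mul_assoc, dTop_mul_eta, mul_assoc, ← map_mul (dTop n)]
    have h3 : eta n * dTop n b * dTop n c = eta n * dTop n (b * c) := by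
      rw [mul_assoc, ← map_mul (dTop n)]
    have h4 : eta n * dTop n b * (eta n * dTop n d) = 0 := by
      rw [mul_assoc, ← mul_assoc (dTop n b), dTop_mul_eta, ← mul_assoc, ← mul_assoc, eta_sq,
        zero_mul, zero_mul]
    rw [add_mul, mul_add, mul_add, ← map_mul (dTop n), h2, h3, h4, add_zero,
      map_add (dTop n), mul_add]
    abel
  | add x y hx hy =>
    obtain ⟨a, b, rfl⟩ := hx
    obtain ⟨c, d, rfl⟩ := hy
    exact ⟨a + c, b + d, by rw [map_add, map_add, mul_add]; abel⟩

lemma sdeg_eps (m : ℕ) (j : Fin (m + 1)) (i : Fin (m + 2)) :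
    sdeg m j (eps (m + 1) i) = eps m (j.predAbove i) :=
  genMap_eps _ i

lemma predAbove_last_last (n : ℕ) :
    (Fin.last n).predAbove (Fin.last (n + 1)) = Fin.last n := by
  rw [Fin.predAbove_of_castSucc_lt _ _ (Fin.castSucc_lt_last _)]
  ext
  simp

lemma predAbove_last_castSucc_last (n : ℕ) :
    (Fin.last n).predAbove ((Fin.last n).castSucc) = Fin.last n := by
  rw [Fin.predAbove_of_le_castSucc _ _ le_rfl, Fin.castPred_castSucc]

lemma sdeg_last_eta' (n : ℕ) : sdeg n (Fin.last n) (eta n) = 0 := by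
  rw [eta_eq, map_sub, sdeg_eps, sdeg_eps, predAbove_last_last, predAbove_last_castSucc_last,
    sub_self]

/-- If `s^last x = 0` then `x = η * dTop b`. -/
lemma ker_sdeg_last (n : ℕ) (x : Lam (n + 1)) (hx : sdeg n (Fin.last n) x = 0) :
    ∃ b : Lam n, x = eta n * dTop n b := by
  obtain ⟨a, b, rfl⟩ := spanning n x
  rw [map_add, sdeg_last_dTop, map_mul, sdeg_last_eta', zero_mul, add_zero] at hx
  exact ⟨b, by rw [hx, map_zero, zero_add]⟩

lemma eta_mul_dTop_eq_zero (n : ℕ) (c : Lam n) (h : eta n * dTop n c = 0) : c = 0 := by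
  have h2 := congrArg (del (n + 1)) h
  rw [del_eta_mul, del_dTop, mul_zero, sub_zero, map_zero] at h2
  exact dTop_injective n (by rw [h2, map_zero])


lemma eps_sq (n : ℕ) (i : Fin (n + 1)) : eps n i * eps n i = 0 :=
  ExteriorAlgebra.ι_sq_zero _

lemma eps_anticomm (n : ℕ) (i k : Fin (n + 1)) :
    eps n i * eps n k = -(eps n k * eps n i) := by
  have h := ι_mul_comm n (Pi.single i 1) (eps n k)
  rw [eps, CliffordAlgebra.involute_ι, neg_mul] at h
  exact h

lemma dTop_eps (n : ℕ) (k : Fin (n + 1)) : dTop n (eps n k) = eps (n + 1) k.castSucc :=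
  genMap_eps _ _

lemma finRange_snoc (n : ℕ) :
    List.finRange (n + 1) = ((List.finRange n).map Fin.castSucc) ++ [Fin.last n] := by
  rw [← List.ofFn_id, List.ofFn_succ', List.ofFn_eq_map, List.concat_eq_append]
  simp

lemma involute_list_prod (n : ℕ) (l : List (Lam n))
    (h : ∀ a ∈ l, CliffordAlgebra.involute a = -a) :
    CliffordAlgebra.involute l.prod = ((-1 : ℝ) ^ l.length) • l.prod := by
  induction l with
  | nil => simp
  | cons a t ih =>
    rw [List.prod_cons, map_mul, h a (List.mem_cons_self),
      ih (fun b hb => h b (List.mem_cons_of_mem a hb)), List.length_cons, pow_succ,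
      mul_smul_comm, neg_mul, smul_neg, mul_neg_one, neg_smul]

lemma Delta_succ (n : ℕ) : Delta (n + 1) = dTop n (Delta n) * eta n := by
  rw [Delta, finRange_snoc, List.map_append, List.prod_append, List.map_map]
  congr 1
  · rw [Delta, map_list_prod (dTop n), List.map_map]
    refine congrArg List.prod (List.map_congr_left fun i _ => ?_)
    show eps (n + 1) (Fin.castSucc i).succ - eps (n + 1) ((Fin.castSucc i).castSucc)
        = dTop n (eps n i.succ - eps n i.castSucc)
    rw [map_sub, dTop_eps, dTop_eps, Fin.succ_castSucc]
  · rw [List.map_singleton, List.prod_singleton]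
    show eps (n + 1) (Fin.last n).succ - eps (n + 1) ((Fin.last n).castSucc) = eta n
    rw [Fin.succ_last, eta_eq]

lemma piTop_succ (n : ℕ) :
    piTop (n + 1) = dTop n (piTop n) * eps (n + 1) (Fin.last (n + 1)) := by
  rw [piTop, finRange_snoc (n + 1), List.map_append, List.prod_append, List.map_map]
  congr 1
  · rw [piTop, map_list_prod (dTop n), List.map_map]
    exact congrArg List.prod (List.map_congr_left fun i _ => (dTop_eps n i).symm)
  · rw [List.map_singleton, List.prod_singleton]

lemma piTop_mul_eps (n : ℕ) : piTop n * eps n (Fin.last n) = 0 := by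
  rw [piTop, finRange_snoc n, List.map_append, List.prod_append, List.map_singleton,
    List.prod_singleton, mul_assoc, eps_sq, mul_zero]

lemma involute_eps (n : ℕ) (i : Fin (n + 1)) :
    CliffordAlgebra.involute (eps n i) = -eps n i :=
  CliffordAlgebra.involute_ι _

lemma involute_Delta (n : ℕ) :
    CliffordAlgebra.involute (Delta n) = ((-1 : ℝ) ^ n) • Delta n := by
  have h := involute_list_prod n
    ((List.finRange n).map (fun i : Fin n => eps n i.succ - eps n i.castSucc)) ?_
  · rwa [List.length_map, List.length_finRange] at h
  · rintro a ha
    obtain ⟨i, -, rfl⟩ := List.mem_map.mp ha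
    rw [map_sub, involute_eps, involute_eps, neg_sub_neg, neg_sub]

lemma involute_piTop (n : ℕ) :
    CliffordAlgebra.involute (piTop n) = ((-1 : ℝ) ^ (n + 1)) • piTop n := by
  have h := involute_list_prod n ((List.finRange (n + 1)).map (fun i => eps n i)) ?_
  · rwa [List.length_map, List.length_finRange] at h
  · rintro a ha
    obtain ⟨i, -, rfl⟩ := List.mem_map.mp ha
    exact involute_eps n i

lemma eta_mul_dTop_Delta (n : ℕ) :
    eta n * dTop n (Delta n) = ((-1 : ℝ) ^ n) • Delta (n + 1) := by
  rw [eta_mul_dTop, involute_Delta, map_smul, smul_mul_assoc, ← Delta_succ]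

lemma eta_mul_dTop_piTop (n : ℕ) :
    eta n * dTop n (piTop n) = ((-1 : ℝ) ^ (n + 1)) • piTop (n + 1) := by
  rw [eta_mul_dTop, involute_piTop, map_smul, smul_mul_assoc]
  congr 1
  rw [eta_eq, mul_sub, ← piTop_succ, ← dTop_eps, ← map_mul (dTop n), piTop_mul_eps, map_zero,
    sub_zero]

lemma Lam0_span (x : Lam 0) : ∃ a b : ℝ, x = a • 1 + b • eps 0 0 := by
  induction x using ExteriorAlgebra.induction with
  | algebraMap r => exact ⟨r, 0, by simp [Algebra.algebraMap_eq_smul_one]⟩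
  | ι v =>
    refine ⟨0, v 0, ?_⟩
    have hv : v = v 0 • (Pi.single (0 : Fin 1) 1 : Fin 1 → ℝ) := by
      funext i
      fin_cases i
      simp
    have h1 : ExteriorAlgebra.ι ℝ v = v 0 • eps 0 0 := by
      conv_lhs => rw [hv]
      exact map_smul _ _ _
    rw [h1, zero_smul]
    exact (zero_add _).symm
  | mul x y hx hy =>
    obtain ⟨a, b, rfl⟩ := hx
    obtain ⟨c, d, rfl⟩ := hy
    refine ⟨a * c, a * d + b * c, ?_⟩
    rw [add_mul, mul_add, mul_add, smul_mul_smul, smul_mul_smul, smul_mul_smul, smul_mul_smul,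
      eps_sq, smul_zero, add_zero, mul_one, one_mul, add_smul, add_assoc, mul_one]
  | add x y hx hy =>
    obtain ⟨a, b, rfl⟩ := hx
    obtain ⟨c, d, rfl⟩ := hy
    exact ⟨a + c, b + d, by rw [add_smul, add_smul]; abel⟩

lemma predAbove_castSucc_castSucc (k : ℕ) (j : Fin (k + 1)) (i : Fin (k + 2)) :
    (j.castSucc).predAbove i.castSucc = (j.predAbove i).castSucc := by
  rcases le_or_gt i j.castSucc with h | h
  · rw [Fin.predAbove_of_le_castSucc _ _ h, Fin.predAbove_of_le_castSucc _ _
      (Fin.castSucc_le_castSucc_iff.mpr h), Fin.castPred_castSucc]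
    ext
    simp [Fin.coe_castPred]
  · rw [Fin.predAbove_of_castSucc_lt _ _ h, Fin.predAbove_of_castSucc_lt _ _
      (Fin.castSucc_lt_castSucc_iff.mpr h)]
    ext
    simp [Fin.coe_pred]

lemma sdeg_castSucc_dTop (k : ℕ) (j : Fin (k + 1)) (y : Lam (k + 1)) :
    sdeg (k + 1) j.castSucc (dTop (k + 1) y) = dTop k (sdeg k j y) := by
  rw [sdeg, dTop, genMap_comp, sdeg, dTop, genMap_comp]
  have h : (fun i : Fin (k + 3) => (j.castSucc).predAbove i)
      ∘ (fun i : Fin (k + 2) => Fin.castSucc i) = fun i => Fin.castSucc (j.predAbove i) := by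
    funext i
    exact predAbove_castSucc_castSucc k j i
  show genMap (fun i => (j.castSucc).predAbove i.castSucc) y = _
  rw [show (fun i : Fin (k + 2) => (j.castSucc).predAbove i.castSucc)
    = fun i => Fin.castSucc (j.predAbove i) from funext fun i => predAbove_castSucc_castSucc k j i]

lemma sdeg_castSucc_eta (k : ℕ) (j : Fin (k + 1)) :
    sdeg (k + 1) j.castSucc (eta (k + 1)) = eta k := by
  have h1 : (j.castSucc).predAbove (Fin.last (k + 2)) = Fin.last (k + 1) := by
    rw [Fin.predAbove_of_castSucc_lt _ _ (Fin.castSucc_lt_last _)]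
    ext
    simp [Fin.coe_pred]
  have h2 : (j.castSucc).predAbove ((Fin.last (k + 1)).castSucc) = (Fin.last k).castSucc := by
    rw [Fin.predAbove_of_castSucc_lt _ _
      (Fin.castSucc_lt_castSucc_iff.mpr (Fin.castSucc_lt_last j))]
    ext
    simp [Fin.coe_pred]
  rw [eta_eq, map_sub, sdeg_eps, sdeg_eps, h1, h2, eta_eq]

lemma prod_map_adj : ∀ (N : ℕ) {A : Type*} [MonoidWithZero A] (h : Fin (N + 2) → A)
    (p : Fin (N + 1)), h p.castSucc * h p.succ = 0 →
    ((List.finRange (N + 2)).map h).prod = 0 := by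
  intro N
  induction N with
  | zero =>
    intro A _ h p hp
    rw [Fin.fin_one_eq_zero p] at hp
    simp only [Fin.castSucc_zero, Fin.succ_zero_eq_one] at hp
    rw [show List.finRange 2 = [0, 1] from rfl]
    simp [hp]
  | succ K ih =>
    intro A _ h p hp
    rcases Fin.eq_zero_or_eq_succ p with rfl | ⟨q, rfl⟩
    · rw [List.finRange_succ, List.map_cons, List.prod_cons,
        List.finRange_succ, List.map_map, List.map_cons, List.prod_cons]
      simp only [Fin.castSucc_zero, Fin.succ_zero_eq_one] at hp
      rw [Function.comp_apply, ← mul_assoc]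
      rw [show h (Fin.succ 0) = h 1 by norm_num]
      rw [hp, zero_mul]
    · rw [List.finRange_succ, List.map_cons, List.prod_cons, List.map_map]
      rw [ih (h ∘ Fin.succ) q ?_, mul_zero]
      show h (Fin.succ q.castSucc) * h (Fin.succ q.succ) = 0
      rw [Fin.succ_castSucc]
      exact hp

lemma sdeg_Delta (m : ℕ) (j : Fin (m + 1)) : sdeg m j (Delta (m + 1)) = 0 := by
  rw [Delta, map_list_prod, List.map_map]
  apply List.prod_eq_zero
  refine List.mem_map.mpr ⟨j, List.mem_finRange j, ?_⟩
  show sdeg m j (eps (m + 1) j.succ - eps (m + 1) j.castSucc) = 0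
  rw [map_sub, sdeg_eps, sdeg_eps, Fin.predAbove_succ_self, Fin.predAbove_castSucc_self,
    sub_self]

lemma sdeg_piTop (m : ℕ) (j : Fin (m + 1)) : sdeg m j (piTop (m + 1)) = 0 := by
  rw [piTop, map_list_prod, List.map_map]
  apply prod_map_adj m _ j
  show sdeg m j (eps (m + 1) j.castSucc) * sdeg m j (eps (m + 1) j.succ) = 0
  rw [sdeg_eps, sdeg_eps, Fin.predAbove_succ_self, Fin.predAbove_castSucc_self, eps_sq]

lemma eta_zero_eq_Delta : eta 0 = Delta 1 := by
  rw [eta_eq, Delta]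
  rw [show List.finRange 1 = [0] from rfl]
  simp only [List.map_cons, List.map_nil, List.prod_cons, List.prod_nil, mul_one]
  rfl

lemma piTop_one : piTop 1 = eps 1 0 * eps 1 (Fin.last 1) := by
  rw [piTop, show List.finRange 2 = [0, 1] from rfl]
  simp only [List.map_cons, List.map_nil, List.prod_cons, List.prod_nil, mul_one]
  rfl

lemma eta_mul_eps_zero : eta 0 * eps 1 0 = -piTop 1 := by
  rw [eta_eq, show (Fin.last 0).castSucc = (0 : Fin 2) from rfl, sub_mul, eps_sq, sub_zero,
    eps_anticomm, piTop_one]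

lemma normalized_sub (m : ℕ) : ∀ x : Lam (m + 1), (∀ j : Fin (m + 1), sdeg m j x = 0) →
    x ∈ Submodule.span ℝ ({Delta (m + 1), piTop (m + 1)} : Set (Lam (m + 1))) := by
  induction m with
  | zero =>
    intro x hx
    obtain ⟨b, rfl⟩ := ker_sdeg_last 0 x (hx (Fin.last 0))
    obtain ⟨a, c, rfl⟩ := Lam0_span b
    rw [map_add, map_smul, map_smul, map_one, dTop_eps, mul_add, mul_smul_comm,
      mul_smul_comm, mul_one]
    rw [show Fin.castSucc (0 : Fin 1) = (0 : Fin 2) from rfl, eta_mul_eps_zero,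
      eta_zero_eq_Delta]
    refine Submodule.add_mem _ (Submodule.smul_mem _ _ ?_) (Submodule.smul_mem _ _
      (Submodule.neg_mem _ ?_))
    · exact Submodule.subset_span (Set.mem_insert _ _)
    · exact Submodule.subset_span (Set.mem_insert_of_mem _ rfl)
  | succ k ih =>
    intro x hx
    obtain ⟨b, rfl⟩ := ker_sdeg_last (k + 1) x (hx (Fin.last (k + 1)))
    have hb : ∀ j : Fin (k + 1), sdeg k j b = 0 := by
      intro j
      have h0 := hx j.castSucc
      rw [map_mul, sdeg_castSucc_eta, sdeg_castSucc_dTop] at h0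
      exact eta_mul_dTop_eq_zero k _ h0
    obtain ⟨a, c, hb'⟩ := Submodule.mem_span_pair.mp (ih b hb)
    rw [← hb', map_add, map_smul, map_smul, mul_add, mul_smul_comm, mul_smul_comm,
      eta_mul_dTop_Delta, eta_mul_dTop_piTop]
    refine Submodule.add_mem _ (Submodule.smul_mem _ _ (Submodule.smul_mem _ _ ?_))
      (Submodule.smul_mem _ _ (Submodule.smul_mem _ _ ?_))
    · exact Submodule.subset_span (Set.mem_insert _ _)
    · exact Submodule.subset_span (Set.mem_insert_of_mem _ rfl)

end Stmt17Aux


theorem stmt_17 (m : ℕ) :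
    {x : Lam (m + 1) | ∀ j : Fin (m + 1), sdeg m j x = 0} =
      ↑(Submodule.span ℝ {Delta (m + 1), piTop (m + 1)}) := by
  ext x
  simp only [Set.mem_setOf_eq, SetLike.mem_coe]
  constructor
  · exact Stmt17Aux.normalized_sub m x
  · intro hx j
    obtain ⟨a, c, rfl⟩ := Submodule.mem_span_pair.mp hx
    rw [map_add, map_smul, map_smul, Stmt17Aux.sdeg_Delta, Stmt17Aux.sdeg_piTop, smul_zero,
      smul_zero, add_zero]
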